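/- Model a program as a list of gates, each gate given by the finite set of variables it acts on (a Finset of a variable type V). Define entanglement-closed liveness over a list L inductively: v is live at point p if either (direct use) there is an index j with p < j < length L and v in the support of the j-th gate, or (entanglement propagation) there exist a variable w and an index j ≤ p with j < length L such that both v and w lie in the support of the j-th gate and w is live at p. Let P = A ++ B ++ C be a program containing B as a contiguous sub-block. Then for every variable v and every point p < length B: if v is live at p with respect to B alone, then v is live at the shifted point (length A + p) with respect to P. Consequently the semantic lifetime of v computed within B, shifted by length A, is contained in its semantic lifetime computed in P (Lifetime Monotonicity). -/
import Mathlib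


/-- Entanglement-closed liveness: the least predicate such that
(1) `v` is live at `p` if some gate strictly after `p` uses `v`;
(2) `v` is live at `p` if some gate at index `≤ p` jointly acts on `v` and on
some variable `w` that is live at `p`. -/
inductive Live {V : Type*} (L : List (Finset V)) : V → ℕ → Prop
  | direct {v : V} {p j : ℕ} (hpj : p < j) (hj : j < L.length)
      (hv : v ∈ L.get ⟨j, hj⟩) : Live L v p
  | entangled {v w : V} {p j : ℕ} (hjp : j ≤ p) (hj : j < L.length)
      (hv : v ∈ L.get ⟨j, hj⟩) (hw : w ∈ L.get ⟨j, hj⟩)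
      (hlive : Live L w p) : Live L v p

lemma get_shift {V : Type*} (A B C : List (Finset V)) (j : ℕ) (hj : j < B.length)
    (h : A.length + j < (A ++ B ++ C).length) :
    (A ++ B ++ C).get ⟨A.length + j, h⟩ = B.get ⟨j, hj⟩ := by
  have h1 : A.length + j < (A ++ B).length := by simp; omega
  simp only [List.get_eq_getElem]
  rw [List.getElem_append_left h1, List.getElem_append_right (by omega)]
  congr 1
  omega

/-- Lifetime Monotonicity: if `v` is live at point `p` with
respect to the sub-block `B` alone, then `v` is live at the shifted point
`A.length + p` with respect to the enclosing program `A ++ B ++ C`. -/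
theorem lifetime_monotonicity {V : Type*} (A B C : List (Finset V)) :
    ∀ (v : V) (p : ℕ), p < B.length → Live B v p →
      Live (A ++ B ++ C) v (A.length + p) := by
  intro v p hp h
  induction h with
  | @direct v p j hpj hj hv =>
      have h' : A.length + j < (A ++ B ++ C).length := by
        simp [List.length_append]; omega
      exact Live.direct (by omega) h' (by rw [get_shift A B C j hj h']; exact hv)
  | @entangled v w p j hjp hj hv hw hlive ih =>
      have h' : A.length + j < (A ++ B ++ C).length := by
        simp [List.length_append]; omega
      exact Live.entangled (by omega) h'
        (by rw [get_shift A B C j hj h']; exact hv)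
        (by rw [get_shift A B C j hj h']; exact hw) (ih hp)
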